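/- Let R be a ring, torsion-free as a ℤ-module, and p a prime. If Ω ∈ R is idempotent modulo p, then the sequence Ω, Ω^p, Ω^(p²), Ω^(p³), ... is a Cauchy sequence in the p-adic topology on R; in particular, for all l ≥ k > 0, Ω^(p^l) - Ω^(p^k) ∈ p^(k+1) R. -/
import Mathlib

private lemma aux_pow_sub_pow {S : Type*} [CommRing S] (x y : S) :
    ∀ n : ℕ, ∃ u : S, x ^ (n+1) - y ^ (n+1) = (x - y) * (((n : S)+1) * y ^ n + (x - y) * u) := by
  intro n
  induction n with
  | zero => exact ⟨0, by ring⟩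
  | succ n ih =>
    obtain ⟨u, hu⟩ := ih
    refine ⟨((n : S)+1) * y ^ n + x * u, ?_⟩
    have h2 : x ^ (n+2) - y ^ (n+2) = x * (x^(n+1) - y^(n+1)) + (x - y) * y^(n+1) := by ring
    rw [h2, hu]; push_cast; ring

private lemma aux_lift {S : Type*} [CommRing S] (p : ℕ) (hp : p.Prime) (x y c : S)
    (h1 : (p : S) ∣ x - y) (h2 : c ∣ x - y) : c * (p : S) ∣ x ^ p - y ^ p := by
  obtain ⟨u, hu⟩ := aux_pow_sub_pow x y (p - 1)
  have hp1 : p - 1 + 1 = p := Nat.succ_pred_eq_of_pos hp.pos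
  have hcast : ((p - 1 : ℕ) : S) + 1 = (p : S) := by
    rw [← hp1]; push_cast; ring
  rw [hp1, hcast] at hu
  rw [hu]
  have h3 : (x - y) * ((p : S) * y ^ (p - 1) + (x - y) * u)
      = (x - y) * (p : S) * y ^ (p - 1) + ((x - y) * (x - y)) * u := by ring
  rw [h3]
  exact dvd_add (Dvd.dvd.mul_right (mul_dvd_mul h2 dvd_rfl) _)
    (Dvd.dvd.mul_right (mul_dvd_mul h2 h1) _)

private lemma aux_comm_key {S : Type*} [CommRing S] (p : ℕ) (hp : p.Prime) (ω : S)
    (h : (p : S) ∣ ω ^ 2 - ω) :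
    ∀ k l : ℕ, 0 < k → k ≤ l → (p : S) ^ (k + 1) ∣ ω ^ (p ^ l) - ω ^ (p ^ k) := by
  have hA : ∀ m : ℕ, (p : S) ∣ ω ^ (m+1) - ω := by
    intro m
    induction m with
    | zero => rw [pow_one, sub_self]; exact dvd_zero _
    | succ m ih =>
      have h4 : ω ^ (m+2) - ω = ω * (ω ^ (m+1) - ω) + (ω ^ 2 - ω) := by ring
      rw [h4]
      exact dvd_add (Dvd.dvd.mul_left ih ω) h
  have hC : ∀ n : ℕ, (p : S) ^ (n+1) ∣ ω ^ (p ^ (n+1)) - ω ^ (p ^ n) := by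
    intro n
    induction n with
    | zero =>
      have h0 := hA (p - 1)
      rw [Nat.sub_add_cancel hp.one_le] at h0
      simpa using h0
    | succ n ih =>
      have hpd : (p : S) ∣ ω ^ (p ^ (n+1)) - ω ^ (p ^ n) :=
        dvd_trans (dvd_pow_self _ (Nat.succ_ne_zero n)) ih
      have h5 := aux_lift p hp (ω ^ (p ^ (n+1))) (ω ^ (p ^ n)) ((p : S) ^ (n+1)) hpd ih
      rw [← pow_mul, ← pow_mul] at h5
      simpa [← pow_succ] using h5
  intro k l hk hkl
  induction l, hkl using Nat.le_induction with
  | base => simp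
  | succ l hkl ih =>
    have h6 : ω ^ (p ^ (l+1)) - ω ^ (p ^ k)
        = (ω ^ (p ^ (l+1)) - ω ^ (p ^ l)) + (ω ^ (p ^ l) - ω ^ (p ^ k)) := by ring
    rw [h6]
    exact dvd_add (dvd_trans (pow_dvd_pow _ (by omega)) (hC l)) ih

/-- If `R` is a ring, torsion-free as a `ℤ`-module, `p` prime, and `Ω` is idempotent
modulo `p`, then the sequence `Ω, Ω^p, Ω^(p²), ...` is Cauchy in the `p`-adic topology:
for all `l ≥ k > 0`, `Ω^(p^l) - Ω^(p^k) ∈ p^(k+1) R`. -/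
theorem stmt3 {R : Type*} [Ring R] [NoZeroSMulDivisors ℤ R] (p : ℕ) (hp : p.Prime)
    (Ω : R) (h : ∃ Λ : R, Ω ^ 2 - Ω = (p : ℤ) • Λ) :
    ∀ k l : ℕ, 0 < k → k ≤ l →
      ∃ Λ' : R, Ω ^ (p ^ l) - Ω ^ (p ^ k) = ((p : ℤ) ^ (k + 1)) • Λ' := by
  obtain ⟨Λ, hΛ⟩ := h
  -- Λ commutes with Ω, by torsion-freeness
  have hcomm : Ω * Λ = Λ * Ω := by
    have hz : (p : ℤ) • (Ω * Λ - Λ * Ω) = 0 := by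
      have h1 : (p : ℤ) • (Ω * Λ - Λ * Ω) = Ω * ((p : ℤ) • Λ) - ((p : ℤ) • Λ) * Ω := by
        rw [smul_sub, mul_smul_comm, smul_mul_assoc]
      rw [h1, ← hΛ]; noncomm_ring
    have hpne : (p : ℤ) ≠ 0 := by exact_mod_cast hp.ne_zero
    exact sub_eq_zero.mp ((smul_eq_zero.mp hz).resolve_left hpne)
  -- the subring generated by Ω and Λ is commutative
  have hscomm : ∀ x ∈ ({Ω, Λ} : Set R), ∀ y ∈ ({Ω, Λ} : Set R), x * y = y * x := by
    intro x hx y hy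
    rcases hx with rfl | rfl <;> rcases hy with rfl | rfl <;> simp_all
  letI : CommRing (Subring.closure ({Ω, Λ} : Set R)) := Subring.closureCommRingOfComm hscomm
  have hΩ : Ω ∈ Subring.closure ({Ω, Λ} : Set R) := Subring.subset_closure (by simp)
  have hΛm : Λ ∈ Subring.closure ({Ω, Λ} : Set R) := Subring.subset_closure (by simp)
  set ω : Subring.closure ({Ω, Λ} : Set R) := ⟨Ω, hΩ⟩ with hω
  set lam : Subring.closure ({Ω, Λ} : Set R) := ⟨Λ, hΛm⟩ with hlam
  have hdvd : (p : Subring.closure ({Ω, Λ} : Set R)) ∣ ω ^ 2 - ω := by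
    refine ⟨lam, Subtype.ext ?_⟩
    show Ω ^ 2 - Ω = (p : R) * Λ
    rw [hΛ, zsmul_eq_mul]
    norm_num
  intro k l hk hkl
  obtain ⟨lam', hlam'⟩ := aux_comm_key p hp ω hdvd k l hk hkl
  refine ⟨(lam' : R), ?_⟩
  have h7 : Ω ^ (p ^ l) - Ω ^ (p ^ k) = (p : R) ^ (k+1) * (lam' : R) :=
    congrArg Subtype.val hlam'
  rw [h7, zsmul_eq_mul]
  push_cast
  ring
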